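/- Given a contraction (π, ∇, h) of N onto M, the sum Im(h) + Im(d_N) is direct: Im(h) ∩ Im(d_N) = 0. If moreover d_M = 0, then Im(h) ⊕ Im(d_N) = Ker(π). -/
import Mathlib


/-- for a contraction (π, ∇, h) of N onto M, the sum Im(h) + Im(dN) is
direct; if moreover dM = 0, then Im(h) ⊕ Im(dN) = Ker(π). -/
theorem contraction_imh_imd_ker_pi
    (F : Type*) [Field F] [CharZero F]
    (N : Type*) [AddCommGroup N] [Module F N]
    (M : Type*) [AddCommGroup M] [Module F M]
    (dN : N →ₗ[F] N) (dM : M →ₗ[F] M)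
    (π : N →ₗ[F] M) (nb : M →ₗ[F] N) (h : N →ₗ[F] N)
    (hdN : dN ∘ₗ dN = 0) (hdM : dM ∘ₗ dM = 0)
    (hπchain : π ∘ₗ dN = dM ∘ₗ π) (hnbchain : dN ∘ₗ nb = nb ∘ₗ dM)
    (hretr : π ∘ₗ nb = LinearMap.id)
    (hhtpy : dN ∘ₗ h + h ∘ₗ dN = nb ∘ₗ π - LinearMap.id)
    (hπh : π ∘ₗ h = 0) (hhnb : h ∘ₗ nb = 0) (hhh : h ∘ₗ h = 0) :
    Disjoint (LinearMap.range h) (LinearMap.range dN) ∧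
    (dM = 0 → LinearMap.range h ⊔ LinearMap.range dN = LinearMap.ker π) := by
  have key : ∀ x : N, dN (h x) + h (dN x) = nb (π x) - x := fun x => by
    have := congrArg (fun f => f x) hhtpy
    simpa using this
  constructor
  · rw [Submodule.disjoint_def]
    rintro x ⟨a, rfl⟩ ⟨b, hb⟩
    have h1 : h (h a) = 0 := congrArg (fun f => f a) hhh
    have h2 : dN (h a) = 0 := by
      rw [← hb]
      have := congrArg (fun f => f b) hdN
      simpa using this
    have h3 : π (h a) = 0 := congrArg (fun f => f a) hπh
    have := key (h a)
    rw [h2, h1, h3] at this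
    simpa using this.symm
  · intro hdM0
    apply le_antisymm
    · rw [sup_le_iff]
      constructor
      · rintro x ⟨a, rfl⟩
        exact congrArg (fun f => f a) hπh
      · rintro x ⟨a, rfl⟩
        have : π (dN a) = dM (π a) := congrArg (fun f => f a) hπchain
        simp [this, hdM0]
    · intro x hx
      have hx0 : π x = 0 := hx
      have := key x
      rw [hx0] at this
      simp only [map_zero, zero_sub] at this
      have hxeq : x = dN (h (-x)) + h (dN (-x)) := by
        rw [map_neg, map_neg, map_neg, map_neg, ← neg_add, this, neg_neg]
      rw [hxeq]
      rw [add_comm]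
      exact Submodule.add_mem_sup ⟨dN (-x), rfl⟩ ⟨h (-x), rfl⟩
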